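/- Let a_1, ..., a_n be real numbers. Suppose there exists a finitely supported probability distribution (X_1,...,X_n) on R^n, supported on the hyperplane Σ a_i x_i = 0, with all marginals equal in distribution. Then for every i, |a_i| ≤ Σ_{j≠i} |a_j|. -/

import Mathlib

lemma fiber_sum_aux {α : Type*} [DecidableEq α] (S : Finset α) (w : α → ℝ) (g : α → ℝ)
    (V : Finset ℝ) (hV : ∀ x ∈ S, g x ∈ V) :
    ∑ x ∈ S, w x * |g x| = ∑ y ∈ V, |y| * ∑ x ∈ S.filter (fun x => g x = y), w x := by
  rw [← Finset.sum_fiberwise_of_maps_to hV (fun x => w x * |g x|)]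
  refine Finset.sum_congr rfl fun y _ => ?_
  rw [Finset.mul_sum]
  refine Finset.sum_congr rfl fun x hx => ?_
  rw [Finset.mem_filter] at hx
  rw [hx.2]; ring

theorem stmt_5 (n : ℕ) (a : Fin n → ℝ)
    (S : Finset (Fin n → ℝ)) (w : (Fin n → ℝ) → ℝ)
    (hpos : ∀ x ∈ S, 0 < w x)
    (hsum : ∑ x ∈ S, w x = 1)
    (hplane : ∀ x ∈ S, ∑ i, a i * x i = 0)
    (hmarg : ∀ i j : Fin n, ∀ y : ℝ,
      ∑ x ∈ S.filter (fun x => x i = y), w x =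
      ∑ x ∈ S.filter (fun x => x j = y), w x)
    (hnontriv : ∃ x ∈ S, x ≠ 0) :
    ∀ i : Fin n, |a i| ≤ ∑ j ∈ Finset.univ.erase i, |a j| := by
  intro i
  set m : Fin n → ℝ := fun k => ∑ x ∈ S, w x * |x k| with hm
  have hmeq : ∀ k l : Fin n, m k = m l := by
    intro k l
    set V : Finset ℝ := (S.image fun x => x k) ∪ (S.image fun x => x l) with hV
    have hk : ∀ x ∈ S, x k ∈ V := fun x hx =>
      Finset.mem_union_left _ (Finset.mem_image_of_mem _ hx)
    have hl : ∀ x ∈ S, x l ∈ V := fun x hx =>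
      Finset.mem_union_right _ (Finset.mem_image_of_mem _ hx)
    rw [hm]
    simp only
    rw [fiber_sum_aux S w (fun x => x k) V hk, fiber_sum_aux S w (fun x => x l) V hl]
    refine Finset.sum_congr rfl fun y _ => ?_
    rw [hmarg k l y]
  have hmnonneg : ∀ k, 0 ≤ m k := fun k =>
    Finset.sum_nonneg fun x hx => mul_nonneg (hpos x hx).le (abs_nonneg _)
  have hmpos : 0 < m i := by
    obtain ⟨x0, hx0S, hx0⟩ := hnontriv
    obtain ⟨k, hk⟩ := Function.ne_iff.mp hx0
    have h1 : 0 < w x0 * |x0 k| :=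
      mul_pos (hpos x0 hx0S) (abs_pos.mpr (by simpa using hk))
    have h2 : w x0 * |x0 k| ≤ m k :=
      Finset.single_le_sum (f := fun x => w x * |x k|)
        (fun x hx => mul_nonneg (hpos x hx).le (abs_nonneg _)) hx0S
    rw [hmeq i k]
    linarith
  have hkey : |a i| * m i ≤ (∑ j ∈ Finset.univ.erase i, |a j|) * m i := by
    have step1 : |a i| * m i = ∑ x ∈ S, w x * |a i * x i| := by
      rw [hm, Finset.mul_sum]
      refine Finset.sum_congr rfl fun x hx => ?_
      rw [abs_mul]; ring
    have step2 : ∀ x ∈ S, |a i * x i| ≤ ∑ j ∈ Finset.univ.erase i, |a j| * |x j| := by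
      intro x hx
      have h := hplane x hx
      have heq : a i * x i = -∑ j ∈ Finset.univ.erase i, a j * x j := by
        rw [← Finset.add_sum_erase _ (fun j => a j * x j) (Finset.mem_univ i)] at h
        linarith
      rw [heq, abs_neg]
      calc |∑ j ∈ Finset.univ.erase i, a j * x j|
          ≤ ∑ j ∈ Finset.univ.erase i, |a j * x j| := Finset.abs_sum_le_sum_abs _ _
        _ = ∑ j ∈ Finset.univ.erase i, |a j| * |x j| := by
            exact Finset.sum_congr rfl fun j _ => abs_mul _ _
    calc |a i| * m i = ∑ x ∈ S, w x * |a i * x i| := step1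
      _ ≤ ∑ x ∈ S, w x * ∑ j ∈ Finset.univ.erase i, |a j| * |x j| :=
          Finset.sum_le_sum fun x hx =>
            mul_le_mul_of_nonneg_left (step2 x hx) (hpos x hx).le
      _ = ∑ j ∈ Finset.univ.erase i, |a j| * ∑ x ∈ S, w x * |x j| := by
          simp only [Finset.mul_sum]
          rw [Finset.sum_comm]
          exact Finset.sum_congr rfl fun j _ => Finset.sum_congr rfl fun x _ => by ring
      _ = (∑ j ∈ Finset.univ.erase i, |a j|) * m i := by
          rw [Finset.sum_mul]
          exact Finset.sum_congr rfl fun j hj => by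
            show |a j| * m j = |a j| * m i
            rw [hmeq j i]
  exact le_of_mul_le_mul_right hkey hmpos
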